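/- Let G = (V,E) be a finite connected simple graph with edge capacities c : E → ℝ≥0, and let H = (V,D) be a simple graph on the same vertex set with demands d : D → ℝ≥0. For S ⊆ V let δ_G(S) denote the total capacity of the edges of G with exactly one endpoint in S, and let δ_H(S) denote the total demand of the edges of H with exactly one endpoint in S. Call S ⊆ V central if both induced subgraphs G[S] and G[V∖S] are connected (in particular S and V∖S are nonempty). Then δ_G(S) ≥ δ_H(S) holds for every subset S ⊆ V if and only if δ_G(S) ≥ δ_H(S) holds for every central subset S ⊆ V. -/

import Mathlib

open scoped Classical

set_option linter.unusedSectionVars false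

namespace CentralCutAux

variable {V : Type*} [Fintype V] [DecidableEq V]

/-- The set of vertices of `A` reachable from `u` inside `G.induce A`. -/
noncomputable def reachSet (G : SimpleGraph V) (A : Finset V) (u : V) : Finset V :=
  A.filter (fun w => ∃ (hu : u ∈ A) (hw : w ∈ A),
    (G.induce (↑A : Set V)).Reachable ⟨u, hu⟩ ⟨w, hw⟩)

variable {G : SimpleGraph V} {A : Finset V} {u : V}

lemma reachSet_subset : reachSet G A u ⊆ A := Finset.filter_subset _ _

lemma mem_reachSet (hu : u ∈ A) {w : V} :
    w ∈ reachSet G A u ↔ ∃ hw : w ∈ A,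
      (G.induce (↑A : Set V)).Reachable ⟨u, hu⟩ ⟨w, hw⟩ := by
  unfold reachSet
  simp only [Finset.mem_filter]
  constructor
  · rintro ⟨hw, _, hw', hr⟩; exact ⟨hw, hr⟩
  · rintro ⟨hw, hr⟩; exact ⟨hw, hu, hw, hr⟩

lemma self_mem_reachSet (hu : u ∈ A) : u ∈ reachSet G A u :=
  (mem_reachSet hu).2 ⟨hu, .refl _⟩

lemma adj_mem_reachSet (hu : u ∈ A) {v w : V} (hv : v ∈ reachSet G A u)
    (hw : w ∈ A) (h : G.Adj v w) : w ∈ reachSet G A u := by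
  rw [mem_reachSet hu] at hv ⊢
  obtain ⟨hv', hr⟩ := hv
  exact ⟨hw, hr.trans (SimpleGraph.Adj.reachable (by exact h))⟩

lemma not_adj_of_not_mem (hu : u ∈ A) {v w : V} (hv : v ∈ reachSet G A u)
    (hw : w ∈ A) (hw' : w ∉ reachSet G A u) : ¬ G.Adj v w :=
  fun h => hw' (adj_mem_reachSet hu hv hw h)

lemma connected_of_reachSet_eq (hu : u ∈ A) (h : reachSet G A u = A) :
    (G.induce (↑A : Set V)).Connected := by
  rw [SimpleGraph.connected_iff_exists_forall_reachable]
  refine ⟨⟨u, hu⟩, ?_⟩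
  rintro ⟨w, hw⟩
  obtain ⟨hw', hr⟩ := (mem_reachSet hu).1 (h ▸ hw)
  exact hr

lemma reachSet_connected (hu : u ∈ A) :
    (G.induce (↑(reachSet G A u) : Set V)).Connected := by
  have huT : u ∈ (↑(reachSet G A u) : Set V) := self_mem_reachSet hu
  apply SimpleGraph.induce_connected_of_patches u huT
  intro v hv
  obtain ⟨hvA, hr⟩ := (mem_reachSet hu).1 hv
  obtain ⟨p⟩ := hr
  let φ : G.induce (↑A : Set V) →g G :=
    (SimpleGraph.Hom.ofLE (SimpleGraph.spanningCoe_induce_le G ↑A)).comp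
      (SimpleGraph.Embedding.spanningCoe _).toHom
  have hφ : ∀ x : (↑A : Set V), φ x = ↑x := fun x => rfl
  let q := p.map φ
  refine ⟨{x | x ∈ q.support}, ?_, ?_, ?_, ?_⟩
  · intro x hx
    simp only [Set.mem_setOf_eq, q, SimpleGraph.Walk.support_map, List.mem_map] at hx
    obtain ⟨y, hy, rfl⟩ := hx
    rw [hφ]
    have hry : (G.induce (↑A : Set V)).Reachable ⟨u, hu⟩ y := ⟨p.takeUntil y hy⟩
    exact (mem_reachSet hu).2 ⟨y.2, hry⟩
  · show u ∈ {x | x ∈ q.support}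
    have := q.start_mem_support
    simpa [q, hφ] using this
  · show v ∈ {x | x ∈ q.support}
    have := q.end_mem_support
    simpa [q, hφ] using this
  · exact (q.connected_induce_support).preconnected _ _

lemma reachSet_exit (hGc : G.Preconnected) (hu : u ∈ A) {s : V} (hs : s ∉ A) :
    ∃ x ∈ reachSet G A u, ∃ y, y ∉ A ∧ G.Adj x y := by
  obtain ⟨p⟩ := hGc u s
  have hs' : s ∉ (↑(reachSet G A u) : Set V) := fun h => hs (reachSet_subset h)
  obtain ⟨d, hd, hd1, hd2⟩ := p.exists_boundary_dart (↑(reachSet G A u) : Set V)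
    (self_mem_reachSet hu) hs'
  by_cases hy : d.snd ∈ A
  · exact absurd (adj_mem_reachSet hu hd1 hy d.adj) hd2
  · exact ⟨d.fst, hd1, d.snd, hy, d.adj⟩

lemma reachSet_compl_connected (hGc : G.Connected) {S : Finset V}
    (hS : (G.induce (↑S : Set V)).Connected) (hu : u ∈ Sᶜ) :
    (G.induce (↑((reachSet G Sᶜ u)ᶜ) : Set V)).Connected := by
  set T := reachSet G Sᶜ u with hT
  have hTS : T ⊆ Sᶜ := reachSet_subset
  obtain ⟨⟨s₀, hs₀⟩⟩ := hS.nonempty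
  have hs₀S : s₀ ∈ S := by simpa using hs₀
  have hsub : ∀ x ∈ S, x ∈ (↑(Tᶜ) : Set V) := by
    intro x hx
    simp only [Finset.coe_compl, Set.mem_compl_iff, Finset.mem_coe]
    exact fun h => (Finset.mem_compl.1 (hTS h)) hx
  apply SimpleGraph.induce_connected_of_patches s₀ (hsub s₀ hs₀S)
  intro v hv
  by_cases hvS : v ∈ S
  · exact ⟨(↑S : Set V), fun x hx => hsub x hx, hs₀S, hvS, hS.preconnected _ _⟩
  · have hv' : v ∈ Sᶜ := Finset.mem_compl.2 hvS
    set T' := reachSet G Sᶜ v with hT'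
    have hT'T : ∀ w ∈ T', w ∉ T := by
      intro w hw hwT
      obtain ⟨hw1, hr1⟩ := (mem_reachSet hv').1 hw
      obtain ⟨hw2, hr2⟩ := (mem_reachSet hu).1 hwT
      have hvT : v ∈ T := (mem_reachSet hu).2 ⟨hv', hr2.trans hr1.symm⟩
      simp only [Finset.coe_compl, Set.mem_compl_iff, Finset.mem_coe] at hv
      exact hv hvT
    obtain ⟨x, hx, y, hy, hxy⟩ := reachSet_exit hGc.preconnected hv'
      (s := s₀) (by simpa using hs₀S)
    have hyS : y ∈ (↑S : Set V) := by simpa using hy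
    have hconn : (G.induce ((↑S : Set V) ∪ ↑T')).Connected :=
      SimpleGraph.connected_induce_union hS.preconnected (reachSet_connected hv').preconnected hyS hx hxy.symm
    refine ⟨(↑S : Set V) ∪ ↑T', ?_, Or.inl hs₀S, Or.inr (self_mem_reachSet hv'),
      hconn.preconnected _ _⟩
    rintro x (hx' | hx')
    · exact hsub x hx'
    · simp only [Finset.coe_compl, Set.mem_compl_iff, Finset.mem_coe]
      exact hT'T _ hx'

/-- The weight of the cut `(S, Sᶜ)` with respect to the weight function `g`. -/
noncomputable def cutW (g : V → V → ℝ) (S : Finset V) : ℝ := ∑ v ∈ S, ∑ w ∈ Sᶜ, g v w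

lemma cutW_compl {g : V → V → ℝ} (hg : ∀ v w, g v w = g w v) (S : Finset V) :
    cutW g Sᶜ = cutW g S := by
  unfold cutW
  rw [compl_compl, Finset.sum_comm]
  exact Finset.sum_congr rfl fun v _ => Finset.sum_congr rfl fun w _ => hg w v

lemma cutW_split (g : V → V → ℝ) {A S : Finset V} (hAS : A ⊆ S) :
    cutW g A + cutW g (S \ A) =
      cutW g S + (∑ v ∈ A, ∑ w ∈ S \ A, g v w) + (∑ v ∈ S \ A, ∑ w ∈ A, g v w) := by
  have h1 : Aᶜ = Sᶜ ∪ (S \ A) := by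
    ext x
    simp only [Finset.mem_compl, Finset.mem_union, Finset.mem_sdiff]
    by_cases hx : x ∈ S <;> by_cases hx' : x ∈ A <;> simp [hx, hx'] <;> tauto
  have h2 : (S \ A)ᶜ = Sᶜ ∪ A := by
    ext x
    simp only [Finset.mem_compl, Finset.mem_union, Finset.mem_sdiff]
    by_cases hx : x ∈ S <;> by_cases hx' : x ∈ A <;> simp [hx, hx'] <;> tauto
  have hd1 : Disjoint Sᶜ (S \ A) := by
    rw [Finset.disjoint_left]
    exact fun x hx hx' => (Finset.mem_compl.1 hx) (Finset.mem_sdiff.1 hx').1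
  have hd2 : Disjoint Sᶜ A := by
    rw [Finset.disjoint_left]
    exact fun x hx hx' => (Finset.mem_compl.1 hx) (hAS hx')
  have hd3 : Disjoint A (S \ A) := by
    rw [Finset.disjoint_left]
    exact fun x hx hx' => (Finset.mem_sdiff.1 hx').2 hx
  have e0 : S = A ∪ (S \ A) := (Finset.union_sdiff_of_subset hAS).symm
  have hA : cutW g A = (∑ v ∈ A, ∑ w ∈ Sᶜ, g v w) + ∑ v ∈ A, ∑ w ∈ S \ A, g v w := by
    unfold cutW
    have hh : ∀ v ∈ A, ∑ w ∈ Aᶜ, g v w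
        = (∑ w ∈ Sᶜ, g v w) + ∑ w ∈ S \ A, g v w := fun v _ => by
      rw [h1, Finset.sum_union hd1]
    rw [Finset.sum_congr rfl hh, Finset.sum_add_distrib]
  have hB : cutW g (S \ A) = (∑ v ∈ S \ A, ∑ w ∈ Sᶜ, g v w) + ∑ v ∈ S \ A, ∑ w ∈ A, g v w := by
    unfold cutW
    have hh : ∀ v ∈ S \ A, ∑ w ∈ (S \ A)ᶜ, g v w
        = (∑ w ∈ Sᶜ, g v w) + ∑ w ∈ A, g v w := fun v _ => by
      rw [h2, Finset.sum_union hd2]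
    rw [Finset.sum_congr rfl hh, Finset.sum_add_distrib]
  have hS1 : cutW g S = (∑ v ∈ A, ∑ w ∈ Sᶜ, g v w) + ∑ v ∈ S \ A, ∑ w ∈ Sᶜ, g v w := by
    have := Finset.sum_union hd3 (f := fun v => ∑ w ∈ Sᶜ, g v w)
    rw [← e0] at this
    exact this
  linarith

lemma main_ineq (G : SimpleGraph V) (hG : G.Connected) (gc gd : V → V → ℝ)
    (hgcs : ∀ v w, gc v w = gc w v) (hgc0 : ∀ v w, ¬ G.Adj v w → gc v w = 0)
    (hgds : ∀ v w, gd v w = gd w v) (hgdn : ∀ v w, 0 ≤ gd v w)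
    (hcent : ∀ S : Finset V, (G.induce (↑S : Set V)).Connected →
      (G.induce (↑(Sᶜ) : Set V)).Connected → cutW gd S ≤ cutW gc S) :
    ∀ S : Finset V, cutW gd S ≤ cutW gc S := by
  have phase2 : ∀ n (S : Finset V), Sᶜ.card ≤ n → (G.induce (↑S : Set V)).Connected →
      cutW gd S ≤ cutW gc S := by
    intro n
    induction n with
    | zero =>
      intro S hc _
      have he : Sᶜ = ∅ := Finset.card_eq_zero.1 (Nat.le_zero.1 hc)
      simp [cutW, he]
    | succ n ih =>
      intro S hc hSconn
      rcases Finset.eq_empty_or_nonempty Sᶜ with he | ⟨u, hu⟩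
      · simp [cutW, he]
      by_cases h2 : (G.induce (↑(Sᶜ) : Set V)).Connected
      · exact hcent S hSconn h2
      set T := reachSet G Sᶜ u with hT
      have hTsub : T ⊆ Sᶜ := reachSet_subset
      have hTne : T ≠ Sᶜ := fun h => h2 (connected_of_reachSet_eq hu h)
      have hTconn : (G.induce (↑T : Set V)).Connected := reachSet_connected hu
      have hTcc : (G.induce (↑(Tᶜ) : Set V)).Connected :=
        reachSet_compl_connected hG hSconn hu
      have hTcent : cutW gd T ≤ cutW gc T := hcent T hTconn hTcc
      have hsplitc := cutW_split gc hTsub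
      have hsplitd := cutW_split gd hTsub
      have hX : (∑ v ∈ T, ∑ w ∈ Sᶜ \ T, gc v w) = 0 := by
        refine Finset.sum_eq_zero fun v hv => Finset.sum_eq_zero fun w hw => ?_
        obtain ⟨hw1, hw2⟩ := Finset.mem_sdiff.1 hw
        exact hgc0 _ _ (not_adj_of_not_mem hu hv hw1 hw2)
      have hY : (∑ v ∈ Sᶜ \ T, ∑ w ∈ T, gc v w) = 0 := by
        refine Finset.sum_eq_zero fun v hv => Finset.sum_eq_zero fun w hw => ?_
        obtain ⟨hv1, hv2⟩ := Finset.mem_sdiff.1 hv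
        rw [hgcs]
        exact hgc0 _ _ (not_adj_of_not_mem hu hw hv1 hv2)
      have hdX : 0 ≤ ∑ v ∈ T, ∑ w ∈ Sᶜ \ T, gd v w :=
        Finset.sum_nonneg fun v _ => Finset.sum_nonneg fun w _ => hgdn v w
      have hdY : 0 ≤ ∑ v ∈ Sᶜ \ T, ∑ w ∈ T, gd v w :=
        Finset.sum_nonneg fun v _ => Finset.sum_nonneg fun w _ => hgdn v w
      have he1 : Sᶜ \ T = (S ∪ T)ᶜ := by
        ext x
        simp only [Finset.mem_sdiff, Finset.mem_compl, Finset.mem_union]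
        tauto
      obtain ⟨⟨s₀, hs₀⟩⟩ := hSconn.nonempty
      have hs₀S : s₀ ∈ S := by simpa using hs₀
      have hrec : cutW gd (S ∪ T) ≤ cutW gc (S ∪ T) := by
        apply ih
        · have hss : Sᶜ \ T ⊂ Sᶜ :=
            Finset.sdiff_ssubset hTsub ⟨u, self_mem_reachSet hu⟩
          have hlt := Finset.card_lt_card hss
          rw [← he1]
          omega
        · obtain ⟨x, hx, y, hy, hxy⟩ := reachSet_exit hG.preconnected hu
            (s := s₀) (by simpa using hs₀S)
          have hyS : y ∈ (↑S : Set V) := by simpa using hy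
          have hcoe : (↑(S ∪ T) : Set V) = (↑S : Set V) ∪ ↑T := by
            simp [Finset.coe_union]
          rw [hcoe]
          exact SimpleGraph.connected_induce_union hSconn.preconnected hTconn.preconnected hyS hx hxy.symm
      have hcc : cutW gc Sᶜ = cutW gc S := cutW_compl hgcs S
      have hcd : cutW gd Sᶜ = cutW gd S := cutW_compl hgds S
      have hc2' : cutW gc (Sᶜ \ T) = cutW gc (S ∪ T) := by
        rw [he1, cutW_compl hgcs]
      have hd2' : cutW gd (Sᶜ \ T) = cutW gd (S ∪ T) := by
        rw [he1, cutW_compl hgds]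
      linarith
  intro S
  induction S using Finset.strongInductionOn with
  | _ S ih =>
    rcases Finset.eq_empty_or_nonempty S with rfl | ⟨u, hu⟩
    · simp [cutW]
    by_cases hconn : reachSet G S u = S
    · exact phase2 Sᶜ.card S le_rfl (connected_of_reachSet_eq hu hconn)
    set T := reachSet G S u with hT
    have hTsub : T ⊆ S := reachSet_subset
    have hT1 : T ⊂ S := hTsub.ssubset_of_ne hconn
    have hT2 : S \ T ⊂ S := Finset.sdiff_ssubset hTsub ⟨u, self_mem_reachSet hu⟩
    have h1 := ih T hT1
    have h2 := ih (S \ T) hT2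
    have hsplitc := cutW_split gc hTsub
    have hsplitd := cutW_split gd hTsub
    have hX : (∑ v ∈ T, ∑ w ∈ S \ T, gc v w) = 0 := by
      refine Finset.sum_eq_zero fun v hv => Finset.sum_eq_zero fun w hw => ?_
      obtain ⟨hw1, hw2⟩ := Finset.mem_sdiff.1 hw
      exact hgc0 _ _ (not_adj_of_not_mem hu hv hw1 hw2)
    have hY : (∑ v ∈ S \ T, ∑ w ∈ T, gc v w) = 0 := by
      refine Finset.sum_eq_zero fun v hv => Finset.sum_eq_zero fun w hw => ?_
      obtain ⟨hv1, hv2⟩ := Finset.mem_sdiff.1 hv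
      rw [hgcs]
      exact hgc0 _ _ (not_adj_of_not_mem hu hw hv1 hv2)
    have hdX : 0 ≤ ∑ v ∈ T, ∑ w ∈ S \ T, gd v w :=
      Finset.sum_nonneg fun v _ => Finset.sum_nonneg fun w _ => hgdn v w
    have hdY : 0 ≤ ∑ v ∈ S \ T, ∑ w ∈ T, gd v w :=
      Finset.sum_nonneg fun v _ => Finset.sum_nonneg fun w _ => hgdn v w
    linarith

end CentralCutAux

/-- The cut-condition holds for all cuts iff it holds for all central cuts
(`S` is central when both `G[S]` and `G[V ∖ S]` are connected). Here
`∑ v ∈ S, ∑ w ∈ Sᶜ, if G.Adj v w then c v w else 0` is the total capacity `δ_G(S)` of the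
supply edges crossing the cut `(S, V ∖ S)`, and similarly for the demands `δ_H(S)`. -/
theorem stmt2 {V : Type*} [Fintype V] [DecidableEq V]
    (G H : SimpleGraph V) [DecidableRel G.Adj] [DecidableRel H.Adj]
    (hG : G.Connected)
    (c d : V → V → ℝ)
    (hcsymm : ∀ u v, c u v = c v u) (hcnn : ∀ u v, 0 ≤ c u v)
    (hdsymm : ∀ u v, d u v = d v u) (hdnn : ∀ u v, 0 ≤ d u v) :
    (∀ S : Finset V,
        ∑ v ∈ S, ∑ w ∈ Sᶜ, (if H.Adj v w then d v w else 0) ≤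
          ∑ v ∈ S, ∑ w ∈ Sᶜ, (if G.Adj v w then c v w else 0)) ↔
    (∀ S : Finset V,
        (G.induce (↑S : Set V)).Connected → (G.induce (↑(Sᶜ) : Set V)).Connected →
        ∑ v ∈ S, ∑ w ∈ Sᶜ, (if H.Adj v w then d v w else 0) ≤
          ∑ v ∈ S, ∑ w ∈ Sᶜ, (if G.Adj v w then c v w else 0)) := by
  constructor
  · intro h S _ _
    exact h S
  · intro hcent S
    have hgcs : ∀ v w, (if G.Adj v w then c v w else 0) = (if G.Adj w v then c w v else 0) := by
      intro v w
      by_cases h : G.Adj v w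
      · rw [if_pos h, if_pos (h.symm), hcsymm]
      · rw [if_neg h, if_neg (fun h' => h h'.symm)]
    have hgds : ∀ v w, (if H.Adj v w then d v w else 0) = (if H.Adj w v then d w v else 0) := by
      intro v w
      by_cases h : H.Adj v w
      · rw [if_pos h, if_pos (h.symm), hdsymm]
      · rw [if_neg h, if_neg (fun h' => h h'.symm)]
    have hgc0 : ∀ v w, ¬ G.Adj v w → (if G.Adj v w then c v w else 0) = 0 := by
      intro v w h; rw [if_neg h]
    have hgdn : ∀ v w, (0:ℝ) ≤ (if H.Adj v w then d v w else 0) := by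
      intro v w
      by_cases h : H.Adj v w
      · rw [if_pos h]; exact hdnn v w
      · rw [if_neg h]
    exact CentralCutAux.main_ineq G hG
      (fun v w => if G.Adj v w then c v w else 0)
      (fun v w => if H.Adj v w then d v w else 0)
      hgcs hgc0 hgds hgdn (fun S h1 h2 => hcent S h1 h2) S
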